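/- Let k, C_0, ..., C_k, L be nonnegative integers with C_0 ≥ 1. If C_0 ≥ L and C_0 + C_1 + ... + C_k ≥ kL, then there exist nonnegative integer edge capacities f_e on the complete directed graph on {v_0, ..., v_k} that decompose into L spanning arborescences rooted at v_0 (each arborescence reaching all of v_1,...,v_k), such that for each i the total capacity of edges leaving v_i is at most C_i. -/

import Mathlib

open Finset

lemma sum_range_mul' {M : Type*} [AddCommMonoid M] (f : ℕ → M) (a b : ℕ) :
    ∑ t ∈ Finset.range (a * b), f t
      = ∑ m ∈ Finset.range a, ∑ l ∈ Finset.range b, f (m * b + l) := by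
  induction a with
  | zero => simp
  | succ a ih =>
      rw [Finset.sum_range_succ, ← ih, Nat.succ_mul, Finset.range_eq_Ico,
        ← Finset.sum_Ico_consecutive f (Nat.zero_le (a*b)) (Nat.le_add_right (a*b) b)]
      congr 1
      · rw [Finset.range_eq_Ico]
      rw [Finset.sum_Ico_eq_sum_range]
      have h : a * b + b - a * b = b := by omega
      rw [h]

lemma realize_arb (k : ℕ) (d : Fin (k+1) → ℕ) (hsum : ∑ i, d i = k) (hd0 : 1 ≤ d 0) :
    ∃ T : Fin (k+1) → Fin (k+1),
      (∀ i : Fin (k+1), i ≠ 0 → ∃ t : ℕ, T^[t] i = 0) ∧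
      (∀ i : Fin (k+1),
        (Finset.univ.filter fun j : Fin (k+1) => j ≠ 0 ∧ T j = i).card = d i) := by
  classical
  have hk : 1 ≤ k := by
    calc 1 ≤ d 0 := hd0
    _ ≤ ∑ i, d i := Finset.single_le_sum (fun i _ => Nat.zero_le _) (Finset.mem_univ 0)
    _ = k := hsum
  set ρ : Fin (k+1) → ℕ := fun i => if 0 < d i then (i : ℕ) else (k+1) + i with hρ
  have hρinj : Function.Injective ρ := by
    intro a b hab
    have ha := a.isLt; have hb := b.isLt
    apply Fin.ext
    simp only [hρ] at hab
    split_ifs at hab <;> omega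
  have hρ0 : ρ 0 = 0 := by
    have h : 0 < d 0 := hd0
    simp [hρ, h]
  set pos : Fin (k+1) → ℕ := fun i => (Finset.univ.filter fun i' => ρ i' < ρ i).card
    with hposdef
  have hposlt : ∀ i, pos i < k + 1 := by
    intro i
    have h1 : (Finset.univ.filter fun i' => ρ i' < ρ i) ⊂ Finset.univ := by
      rw [Finset.ssubset_univ_iff]
      intro h
      have hi : i ∈ (Finset.univ : Finset (Fin (k+1))) := Finset.mem_univ i
      rw [← h] at hi
      simp at hi
    have := Finset.card_lt_card h1
    simpa using this
  have hposmono : ∀ a b, ρ a < ρ b → pos a < pos b := by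
    intro a b hab
    apply Finset.card_lt_card
    constructor
    · intro x hx
      simp only [Finset.mem_filter, Finset.mem_univ, true_and] at hx ⊢
      omega
    · intro h
      have : a ∈ Finset.univ.filter fun i' => ρ i' < ρ a :=
        h (by simp only [Finset.mem_filter, Finset.mem_univ, true_and]; exact hab)
      simp at this
  have hposinj : Function.Injective pos := by
    intro a b hab
    rcases lt_trichotomy (ρ a) (ρ b) with h | h | h
    · exact absurd hab (Nat.ne_of_lt (hposmono _ _ h))
    · exact hρinj h
    · exact absurd hab.symm (Nat.ne_of_lt (hposmono _ _ h))
  have hposbij : Function.Bijective (fun i => (⟨pos i, hposlt i⟩ : Fin (k+1))) := by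
    rw [Fintype.bijective_iff_injective_and_card]
    exact ⟨fun a b hab => hposinj (by simpa using congrArg Fin.val hab), rfl⟩
  have hpos0 : pos 0 = 0 := by
    rw [hposdef]
    simp only [hρ0]
    rw [Finset.card_eq_zero, Finset.filter_eq_empty_iff]
    intro x _; omega
  have hposne : ∀ j : Fin (k+1), j ≠ 0 → 1 ≤ pos j := by
    intro j hj
    rcases Nat.eq_zero_or_pos (pos j) with h | h
    · exfalso; apply hj; apply hposinj; rw [h, hpos0]
    · exact h
  set D : Fin (k+1) → ℕ := fun i => ∑ i' ∈ Finset.univ.filter (fun i' => ρ i' < ρ i), d i'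
    with hDdef
  have hnotmem : ∀ i : Fin (k+1), i ∉ Finset.univ.filter fun i' => ρ i' < ρ i := by
    intro i; simp
  have hDd : ∀ i, D i + d i ≤ k := by
    intro i
    have h1 : D i + d i = ∑ i' ∈ insert i (Finset.univ.filter fun i' => ρ i' < ρ i), d i' := by
      rw [Finset.sum_insert (hnotmem i)]
      simp only [hDdef]
      omega
    rw [h1]
    exact le_of_le_of_eq (Finset.sum_le_sum_of_subset (Finset.subset_univ _)) hsum
  have hDmono : ∀ a b : Fin (k+1), ρ a < ρ b → D a + d a ≤ D b := by
    intro a b hab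
    have h1 : D a + d a = ∑ i' ∈ insert a (Finset.univ.filter fun i' => ρ i' < ρ a), d i' := by
      rw [Finset.sum_insert (hnotmem a)]
      simp only [hDdef]
      omega
    rw [h1]
    simp only [hDdef]
    apply Finset.sum_le_sum_of_subset
    intro x hx
    simp only [Finset.mem_insert, Finset.mem_filter, Finset.mem_univ, true_and] at hx ⊢
    rcases hx with rfl | hx
    · exact hab
    · omega
  have hDpos : ∀ j : Fin (k+1), 0 < d j → pos j ≤ D j := by
    intro j hj
    simp only [hposdef, hDdef]
    rw [Finset.card_eq_sum_ones]
    apply Finset.sum_le_sum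
    intro i' hi'
    simp only [Finset.mem_filter, Finset.mem_univ, true_and] at hi'
    by_contra h
    have hd' : d i' = 0 := by omega
    have : ρ i' = (k+1) + i' := by simp [hρ, hd']
    have hρj : ρ j = (j : ℕ) := by simp [hρ, hj]
    have := j.isLt
    omega
  have hD0 : D 0 = 0 := by
    rw [hDdef]
    apply Finset.sum_eq_zero
    intro x hx
    simp only [Finset.mem_filter, Finset.mem_univ, true_and, hρ0] at hx
    omega
  have hex : ∀ q, q < k → ∃ i, D i ≤ q ∧ q < D i + d i := by
    intro q hq
    set s := Finset.univ.filter fun i : Fin (k+1) => D i ≤ q with hs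
    have hsne : s.Nonempty := ⟨0, by simp [hs, hD0]⟩
    obtain ⟨i, hi, hmax⟩ := Finset.exists_max_image s ρ hsne
    refine ⟨i, (Finset.mem_filter.1 hi).2, ?_⟩
    by_contra hcon
    push_neg at hcon
    -- the set of vertices above i in ρ-order
    have hsum' : ∑ i' ∈ insert i (Finset.univ.filter fun i' => ρ i' < ρ i), d i'
        = D i + d i := by
      rw [Finset.sum_insert (hnotmem i)]
      simp only [hDdef]
      omega
    have hne' : (Finset.univ.filter fun i' : Fin (k+1) => ρ i < ρ i').Nonempty := by
      by_contra hemp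
      rw [Finset.not_nonempty_iff_eq_empty, Finset.filter_eq_empty_iff] at hemp
      have : Finset.univ ⊆ insert i (Finset.univ.filter fun i' => ρ i' < ρ i) := by
        intro x _
        simp only [Finset.mem_insert, Finset.mem_filter, Finset.mem_univ, true_and]
        rcases lt_trichotomy (ρ x) (ρ i) with h | h | h
        · right; exact h
        · left; exact hρinj h
        · exact absurd h (hemp (Finset.mem_univ x))
      have hle := Finset.sum_le_sum_of_subset this (f := d)
      rw [hsum', hsum] at hle
      omega
    obtain ⟨i', hi'mem, hmin⟩ := Finset.exists_min_image _ ρ hne'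
    simp only [Finset.mem_filter, Finset.mem_univ, true_and] at hi'mem
    have hDi' : D i' ≤ D i + d i := by
      rw [hDdef, ← hsum']
      apply Finset.sum_le_sum_of_subset
      intro x hx
      simp only [Finset.mem_filter, Finset.mem_univ, true_and] at hx
      simp only [Finset.mem_insert, Finset.mem_filter, Finset.mem_univ, true_and]
      rcases lt_trichotomy (ρ x) (ρ i) with h | h | h
      · right; exact h
      · left; exact hρinj h
      · exfalso
        have := hmin x (by simp only [Finset.mem_filter, Finset.mem_univ, true_and]; exact h)
        omega
    have hi's : i' ∈ s := by
      simp only [hs, Finset.mem_filter, Finset.mem_univ, true_and]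
      omega
    have := hmax i' hi's
    omega
  choose F hF using hex
  have hposk : ∀ j : Fin (k+1), j ≠ 0 → pos j - 1 < k := by
    intro j hj
    have := hposlt j
    have := hposne j hj
    omega
  set T : Fin (k+1) → Fin (k+1) := fun j =>
    if h : pos j = 0 then 0 else F (pos j - 1) (by
      have := hposlt j
      omega) with hT
  have hTspec : ∀ j : Fin (k+1), j ≠ 0 →
      D (T j) ≤ pos j - 1 ∧ pos j - 1 < D (T j) + d (T j) := by
    intro j hj
    have h1 : pos j ≠ 0 := by have := hposne j hj; omega
    rw [hT]
    simp only [h1, dif_neg, not_false_iff]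
    exact hF _ _
  have hTρ : ∀ j : Fin (k+1), j ≠ 0 → ρ (T j) < ρ j := by
    intro j hj
    obtain ⟨h1, h2⟩ := hTspec j hj
    have hdT : 0 < d (T j) := by omega
    have hρT : ρ (T j) = ((T j : Fin (k+1)) : ℕ) := by simp [hρ, hdT]
    by_cases hdj : 0 < d j
    · -- ρ j = j
      have hρj : ρ j = (j : ℕ) := by simp [hρ, hdj]
      by_contra hcon
      push_neg at hcon
      have hpj := hposne j hj
      have hDj := hDpos j hdj
      rcases eq_or_lt_of_le hcon with h | h
      · have : T j = j := hρinj h.symm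
        rw [this] at h1
        omega
      · have := hDmono j (T j) h
        omega
    · have : ρ j = (k+1) + j := by
        have : d j = 0 := by omega
        simp [hρ, this]
      have := (T j).isLt
      omega
  have hreach : ∀ m, ∀ j : Fin (k+1), j ≠ 0 → ρ j ≤ m → ∃ t : ℕ, T^[t] j = 0 := by
    intro m
    induction m with
    | zero =>
        intro j hj hm
        exfalso
        apply hj
        apply hρinj
        rw [hρ0]; omega
    | succ m ih =>
        intro j hj hm
        by_cases hTj : T j = 0
        · exact ⟨1, by simpa using hTj⟩
        · have h1 := hTρ j hj
          obtain ⟨t, ht⟩ := ih (T j) hTj (by omega)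
          exact ⟨t + 1, by rw [Function.iterate_succ_apply]; exact ht⟩
  refine ⟨T, fun i hi => hreach (ρ i) i hi le_rfl, ?_⟩
  intro i
  have hiff : ∀ j : Fin (k+1), (j ≠ 0 ∧ T j = i) ↔
      pos j ∈ Finset.Icc (D i + 1) (D i + d i) := by
    intro j
    rw [Finset.mem_Icc]
    constructor
    · rintro ⟨hj, hTj⟩
      obtain ⟨h1, h2⟩ := hTspec j hj
      rw [hTj] at h1 h2
      have := hposne j hj
      omega
    · rintro ⟨h1, h2⟩
      have hdi : 0 < d i := by omega
      have hj : j ≠ 0 := by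
        intro h; rw [h, hpos0] at h1; omega
      obtain ⟨h3, h4⟩ := hTspec j hj
      refine ⟨hj, ?_⟩
      have hpj := hposne j hj
      rcases lt_trichotomy (ρ (T j)) (ρ i) with h | h | h
      · have := hDmono (T j) i h
        omega
      · exact hρinj h
      · have := hDmono i (T j) h
        omega
  have hcard1 : (Finset.univ.filter fun j : Fin (k+1) => j ≠ 0 ∧ T j = i)
      = Finset.univ.filter fun j : Fin (k+1) => pos j ∈ Finset.Icc (D i + 1) (D i + d i) := by
    apply Finset.filter_congr
    intro j _
    exact hiff j
  rw [hcard1]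
  have hcard2 : (Finset.univ.filter fun j : Fin (k+1) =>
      pos j ∈ Finset.Icc (D i + 1) (D i + d i)).card
      = (Finset.Icc (D i + 1) (D i + d i)).card := by
    apply Finset.card_bij (fun j _ => pos j)
    · intro j hj
      exact (Finset.mem_filter.1 hj).2
    · intro a _ b _ hab
      exact hposinj hab
    · intro b hb
      have hble : b ≤ D i + d i := (Finset.mem_Icc.1 hb).2
      have hbk : b < k + 1 := by have := hDd i; omega
      obtain ⟨j, hjeq⟩ := hposbij.2 ⟨b, hbk⟩
      have hjb : pos j = b := by simpa using congrArg Fin.val hjeq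
      exact ⟨j, Finset.mem_filter.2 ⟨Finset.mem_univ _, by rw [hjb]; exact hb⟩, hjb⟩
  rw [hcard2, Nat.card_Icc]
  omega


/-- Lemma 2 (integer form): if `C 0 ≥ L` and `∑ i, C i ≥ k * L`, there is an
integer edge-capacity assignment on the complete digraph on `{v_0,...,v_k}`
that decomposes into `L` spanning arborescences rooted at `v_0` (each encoded
by a parent function, every non-root vertex reaching the root, hence having
in-degree 1), such that the total capacity of edges leaving each node `i`
(counted over all `L` arborescences) is at most `C i`. -/
theorem stmt_1 (k : ℕ) (C : Fin (k + 1) → ℕ) (L : ℕ)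
    (hC0pos : 1 ≤ C 0) (hC0 : L ≤ C 0) (hsum : k * L ≤ ∑ i, C i) :
    ∃ T : Fin L → Fin (k + 1) → Fin (k + 1),
      (∀ l : Fin L, ∀ i : Fin (k + 1), i ≠ 0 → ∃ t : ℕ, (T l)^[t] i = 0) ∧
      (∀ i : Fin (k + 1),
        (∑ j : Fin (k + 1),
          (Finset.univ.filter fun l : Fin L => j ≠ 0 ∧ T l j = i).card) ≤ C i) := by
  classical
  rcases Nat.eq_zero_or_pos L with hL0 | hL
  · subst hL0
    refine ⟨fun _ _ => 0, fun l => l.elim0, fun i => ?_⟩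
    have h : ∀ j : Fin (k+1),
        ((Finset.univ : Finset (Fin 0)).filter fun l => j ≠ 0 ∧ (0 : Fin (k+1)) = i).card = 0 := by
      intro j
      simp
    simp only [h]
    simp
  rcases Nat.eq_zero_or_pos k with hk0 | hk
  · subst hk0
    refine ⟨fun _ _ => 0, ?_, ?_⟩
    · intro l i hi
      exfalso
      apply hi
      apply Fin.ext
      have := i.isLt
      omega
    · intro i
      have h : ∀ j : Fin 1, j = 0 := fun j => Fin.ext (by have := j.isLt; omega)
      have h2 : ∀ j : Fin 1,
          ((Finset.univ : Finset (Fin L)).filter fun l => j ≠ 0 ∧ (0 : Fin 1) = i).card = 0 := by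
        intro j
        rw [Finset.card_eq_zero, Finset.filter_eq_empty_iff]
        intro l _
        rw [h j]
        simp
      simp only [h2]
      simp
  set W : ℕ → ℕ := fun i => min (k*L) (∑ j ∈ Finset.range i, if h : j < k+1 then C ⟨j, h⟩ else 0)
    with hWdef
  have hWmono : Monotone W := by
    intro a b hab
    exact min_le_min le_rfl (Finset.sum_le_sum_of_subset (Finset.range_subset_range.2 hab))
  have hW0 : W 0 = 0 := by simp [hWdef]
  have hWtop : W (k+1) = k*L := by
    have h1 : ∑ j ∈ Finset.range (k+1), (if h : j < k+1 then C ⟨j, h⟩ else 0) = ∑ i, C i := by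
      rw [← Fin.sum_univ_eq_sum_range (fun j => if h : j < k+1 then C ⟨j, h⟩ else 0) (k+1)]
      apply Finset.sum_congr rfl
      intro i _
      simp [i.isLt]
    simp only [hWdef, h1]
    omega
  have hWstep : ∀ i : Fin (k+1), W ((i : ℕ)+1) ≤ W i + C i := by
    intro i
    have h1 : (if h : (i:ℕ) < k+1 then C ⟨(i:ℕ), h⟩ else 0) = C i := by
      simp [i.isLt]
    simp only [hWdef, Finset.sum_range_succ, h1]
    omega
  have hW1 : L ≤ W 1 := by
    have h0 : (0:ℕ) < k + 1 := by omega
    simp only [hWdef, Finset.sum_range_one, dif_pos h0]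
    have h2 : C ⟨0, h0⟩ = C 0 := rfl
    rw [h2]
    have hkL : L ≤ k * L := Nat.le_mul_of_pos_left L hk
    omega
  -- the token-to-parent map
  have hPne : ∀ t : ℕ, (Finset.univ.filter fun i : Fin (k+1) => W i ≤ t).Nonempty := by
    intro t
    refine ⟨0, Finset.mem_filter.2 ⟨Finset.mem_univ _, ?_⟩⟩
    have : ((0 : Fin (k+1)) : ℕ) = 0 := rfl
    rw [this, hW0]
    exact Nat.zero_le t
  set P : ℕ → Fin (k+1) := fun t => Finset.max' _ (hPne t) with hPdef
  have hPmem : ∀ t, W (P t) ≤ t := by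
    intro t
    have := Finset.max'_mem _ (hPne t)
    exact (Finset.mem_filter.1 this).2
  have hPmax : ∀ t (i : Fin (k+1)), W i ≤ t → i ≤ P t := by
    intro t i h
    exact Finset.le_max' _ i (Finset.mem_filter.2 ⟨Finset.mem_univ _, h⟩)
  have hPchar : ∀ t, t < k*L → ∀ i : Fin (k+1), P t = i ↔ (W i ≤ t ∧ t < W ((i:ℕ)+1)) := by
    intro t ht i
    constructor
    · rintro rfl
      refine ⟨hPmem t, ?_⟩
      by_cases h : ((P t : Fin (k+1)) : ℕ) = k
      · rw [h, hWtop]; exact ht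
      · have hlt : ((P t : Fin (k+1)) : ℕ) + 1 < k + 1 := by
          have := (P t).isLt; omega
        by_contra hcon
        push_neg at hcon
        have := hPmax t ⟨(P t : ℕ) + 1, hlt⟩ hcon
        have h2 : ((⟨((P t : Fin (k+1)) : ℕ) + 1, hlt⟩ : Fin (k+1)) : ℕ) ≤ ((P t : Fin (k+1)) : ℕ) := this
        simp at h2
    · rintro ⟨h1, h2⟩
      have hle : i ≤ P t := hPmax t i h1
      have hge : P t ≤ i := by
        by_contra hcon
        push_neg at hcon
        have hval : (i : ℕ) + 1 ≤ ((P t : Fin (k+1)) : ℕ) := hcon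
        have := le_trans (hWmono hval) (hPmem t)
        omega
      exact le_antisymm hge hle
  have htok : ∀ i : Fin (k+1), ((Finset.range (k*L)).filter fun t => P t = i).card ≤ C i := by
    intro i
    have hset : ((Finset.range (k*L)).filter fun t => P t = i)
        = Finset.Ico (W i) (W ((i:ℕ)+1)) := by
      ext t
      simp only [Finset.mem_filter, Finset.mem_range, Finset.mem_Ico]
      constructor
      · rintro ⟨ht, hP⟩
        exact (hPchar t ht i).1 hP
      · rintro ⟨h1, h2⟩
        have hle : W ((i:ℕ)+1) ≤ k*L := by
          have := hWmono (show (i:ℕ)+1 ≤ k+1 by have := i.isLt; omega)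
          rw [hWtop] at this
          exact this
        have ht : t < k*L := by omega
        exact ⟨ht, (hPchar t ht i).2 ⟨h1, h2⟩⟩
    rw [hset, Nat.card_Ico]
    have := hWstep i
    omega
  -- degrees of each arborescence
  set d : ℕ → Fin (k+1) → ℕ :=
      fun l i => ((Finset.range k).filter fun m => P (m*L + l) = i).card with hddef
  have hdsum : ∀ l : ℕ, ∑ i, d l i = k := by
    intro l
    simp only [hddef, Finset.card_filter]
    rw [Finset.sum_comm]
    have h1 : ∀ m : ℕ, (∑ i : Fin (k+1), if P (m*L+l) = i then 1 else 0) = 1 := by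
      intro m
      rw [Finset.sum_ite_eq]
      simp
    calc ∑ m ∈ Finset.range k, ∑ i : Fin (k+1), (if P (m*L+l) = i then 1 else 0)
        = ∑ m ∈ Finset.range k, 1 := Finset.sum_congr rfl fun m _ => h1 m
      _ = k := by simp
  have hd0 : ∀ l : ℕ, l < L → 1 ≤ d l 0 := by
    intro l hl
    have hlkL : l < k * L := lt_of_lt_of_le hl (Nat.le_mul_of_pos_left L hk)
    have hPl : P (0*L + l) = 0 := by
      rw [zero_mul, zero_add]
      apply (hPchar l hlkL 0).2
      constructor
      · have h0 : ((0 : Fin (k+1)) : ℕ) = 0 := rfl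
        rw [h0, hW0]
        exact Nat.zero_le l
      · have h0 : ((0 : Fin (k+1)) : ℕ) + 1 = 1 := rfl
        rw [h0]
        omega
    have hmem : 0 ∈ (Finset.range k).filter fun m => P (m*L + l) = 0 :=
      Finset.mem_filter.2 ⟨Finset.mem_range.2 hk, hPl⟩
    have := Finset.card_pos.2 ⟨0, hmem⟩
    simpa [hddef] using this
  have hreal : ∀ l : Fin L, ∃ T : Fin (k+1) → Fin (k+1),
      (∀ i : Fin (k+1), i ≠ 0 → ∃ t : ℕ, T^[t] i = 0) ∧
      (∀ i : Fin (k+1),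
        (Finset.univ.filter fun j : Fin (k+1) => j ≠ 0 ∧ T j = i).card = d (l : ℕ) i) :=
    fun l => realize_arb k (d (l : ℕ)) (hdsum (l : ℕ)) (hd0 (l : ℕ) l.isLt)
  choose T hT1 hT2 using hreal
  refine ⟨T, hT1, ?_⟩
  intro i
  have step1 : (∑ j : Fin (k+1),
      (Finset.univ.filter fun l : Fin L => j ≠ 0 ∧ T l j = i).card)
      = ∑ l : Fin L, (Finset.univ.filter fun j : Fin (k+1) => j ≠ 0 ∧ T l j = i).card := by
    simp only [Finset.card_filter]
    rw [Finset.sum_comm]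
  have step2 : ∑ l : Fin L, (Finset.univ.filter fun j : Fin (k+1) => j ≠ 0 ∧ T l j = i).card
      = ∑ l ∈ Finset.range L, d l i := by
    rw [← Fin.sum_univ_eq_sum_range (fun l => d l i) L]
    exact Finset.sum_congr rfl fun l _ => hT2 l i
  have step3 : ∑ l ∈ Finset.range L, d l i
      = ((Finset.range (k*L)).filter fun t => P t = i).card := by
    simp only [hddef, Finset.card_filter]
    rw [sum_range_mul' (fun t => if P t = i then 1 else 0) k L, Finset.sum_comm]
  rw [step1, step2, step3]
  exact htok i
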